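/- Let a > 0, b > 0, c ∈ ℝ with μ := b²/4 − c < 0, and let λ₂(p) = −b/2 + √(μ − ap), using the branch of the square root with nonnegative real part. Then there exist δ > 0 and ω* > 0 such that Re λ₂(iω) > δ for all real ω with |ω| ≥ ω*. -/

import Mathlib

open MeasureTheory Filter Set Complex ENNReal

noncomputable section

def Cplus : Set ℂ := {p : ℂ | 0 < p.re}

def sqrtB (z : ℂ) : ℂ := z ^ (1/2 : ℂ)

def lam1 (a b c : ℝ) (p : ℂ) : ℂ :=
  -(b/2 : ℝ) - sqrtB (((b^2/4 - c : ℝ) : ℂ) - (a : ℂ) * p)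

def lam2 (a b c : ℝ) (p : ℂ) : ℂ :=
  -(b/2 : ℝ) + sqrtB (((b^2/4 - c : ℝ) : ℂ) - (a : ℂ) * p)

def MemHinf (h : ℂ → ℂ) : Prop :=
  DifferentiableOn ℂ h Cplus ∧ ∃ M : ℝ, ∀ p ∈ Cplus, ‖h p‖ ≤ M

def eH2Norm (h : ℂ → ℂ) : ℝ≥0∞ :=
  ⨆ k ∈ Set.Ioi (0:ℝ), eLpNorm (fun ω : ℝ => h ((k : ℂ) + (ω : ℂ) * I)) 2 volume

def MemH2 (h : ℂ → ℂ) : Prop :=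
  DifferentiableOn ℂ h Cplus ∧ eH2Norm h < ⊤

theorem lam2_re_pos_on_axis
    (a b c : ℝ) (ha : 0 < a) (hb : 0 < b) (hmu : b ^ 2 / 4 - c < 0) :
    ∃ δ > (0:ℝ), ∃ ωstar > (0:ℝ), ∀ ω : ℝ, ωstar ≤ |ω| →
      δ < (lam2 a b c ((ω : ℂ) * I)).re := by
  set μ := b ^ 2 / 4 - c with hμdef
  clear_value μ
  refine ⟨1, one_pos, (2 * (b/2 + 2)^2 + |μ|) / a + 1, ?_, ?_⟩
  · positivity
  intro ω hω
  set z : ℂ := ((μ : ℝ) : ℂ) - (a : ℂ) * ((ω : ℂ) * I) with hz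
  have hzre : z.re = μ := by simp [hz]
  have hzim : z.im = -(a * ω) := by simp [hz]
  have habs : a * |ω| ≤ ‖z‖ := by
    calc a * |ω| = |z.im| := by rw [hzim]; rw [abs_neg, abs_mul, abs_of_pos ha]
    _ ≤ ‖z‖ := Complex.abs_im_le_norm z
  have hkey : 2 * (b/2 + 2)^2 ≤ ‖z‖ + μ := by
    have h1 : 2 * (b/2 + 2)^2 + |μ| ≤ a * |ω| := by
      have := (div_le_iff₀ ha).mp (by linarith : (2 * (b/2 + 2)^2 + |μ|) / a ≤ |ω|)
      linarith [this]
    have h3 : |μ| = -μ := abs_of_neg hmu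
    nlinarith [habs, h1, h3]
  have hre : (sqrtB z).re = Real.sqrt ((‖z‖ + μ) / 2) := by
    have : sqrtB z = z ^ (2⁻¹ : ℂ) := by norm_num [sqrtB]
    rw [this, Complex.cpow_inv_two_re, hzre]
  have hsq : b/2 + 2 ≤ Real.sqrt ((‖z‖ + μ) / 2) := by
    have h2 : (b/2 + 2)^2 ≤ (‖z‖ + μ) / 2 := by linarith
    calc b/2 + 2 = Real.sqrt ((b/2+2)^2) := by
          rw [Real.sqrt_sq (by positivity)]
    _ ≤ _ := Real.sqrt_le_sqrt h2
  have : (lam2 a b c ((ω : ℂ) * I)).re = -(b/2) + (sqrtB z).re := by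
    simp only [lam2, hz, hμdef, Complex.add_re, Complex.neg_re, Complex.ofReal_re]
  rw [this, hre]
  linarith
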